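/- Let b ∈ ℕ³ and a = b − e_i, and suppose K^b I is ⟨ij,ik,jk⟩ and K^a I is ⟨ij,k⟩ or ⟨i,j,k⟩. Then the degree-1 canonical sylvan matrix D^{a,b} (rows indexed by the vertices i,j,k of K^a I, columns by the edges of K^b I) is: D_{i,ij} = (−1)^{j,ij}/3, D_{j,ij} = 2(−1)^{i,ij}/3, D_{k,ij} = (−1)^{j,ij}/3; D_{i,ik} = (−1)^{k,ik}/3, D_{j,ik} = (−1)^{k,ik}/3, D_{k,ik} = 2(−1)^{i,ik}/3; and D_{v,jk} = 0 for every vertex v. -/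

import Mathlib

open Classical

noncomputable section

namespace Sylvan

/-- Exponent vectors in three variables. -/
abbrev V3 := Fin 3 → ℕ

/-- The `i`-th standard basis vector. -/
def stdVec (i : Fin 3) : V3 := fun j => if j = i then 1 else 0

/-- A monomial ideal, identified with its (upward closed) set of exponent vectors. -/
def IsMonomialIdeal (I : Set V3) : Prop :=
  ∀ ⦃c d : V3⦄, c ∈ I → (∀ i, c i ≤ d i) → d ∈ I

/-- The 0-1 indicator vector of a squarefree face. -/
def ind (τ : Finset (Fin 3)) : V3 := fun i => if i ∈ τ then 1 else 0

/-- The Koszul simplicial complex of `I` in degree `b`: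
faces `τ` with `b ≥ τ` and `x^(b-τ) ∈ I`. -/
def K (I : Set V3) (b : V3) : Set (Finset (Fin 3)) :=
  {τ | (∀ i, ind τ i ≤ b i) ∧ (fun i => b i - ind τ i) ∈ I}

/-- `x^a` is a minimal monomial generator of `I`. -/
def IsMinGen (I : Set V3) (a : V3) : Prop :=
  a ∈ I ∧ ∀ c ∈ I, (∀ i, c i ≤ a i) → c = a

/-- Reduced simplicial chains: formal `k`-linear combinations of faces
(the empty face included). -/
abbrev Ch (k : Type) [Field k] := Finset (Fin 3) →₀ k

variable (k : Type) [Field k]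

/-- The sign `(-1)^(position of v in σ)`. -/
def esgn (v : Fin 3) (σ : Finset (Fin 3)) : ℤ :=
  (-1 : ℤ) ^ (σ.filter (fun u => u < v)).card

/-- The boundary of a single face. -/
def bd (σ : Finset (Fin 3)) : Ch k :=
  ∑ v ∈ σ, Finsupp.single (σ.erase v) ((esgn v σ : ℤ) : k)

/-- The (reduced) simplicial boundary operator. -/
def bdry : Ch k →ₗ[k] Ch k :=
  Finsupp.lsum k fun σ => LinearMap.toSpanSingleton k (Ch k) (bd k σ)

/-- `coeffSign k v σ` is the coefficient of `σ \ {v}` in `∂σ`,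
i.e. the sign `(-1)^{v,σ}` of the paper. -/
def coeffSign (v : Fin 3) (σ : Finset (Fin 3)) : k :=
  bdry k (Finsupp.single σ (1:k)) (σ.erase v)

/-- Faces of cardinality `c` (dimension `c-1`) of a simplicial complex. -/
def faces (Kc : Set (Finset (Fin 3))) (c : ℕ) : Set (Finset (Fin 3)) :=
  {σ | σ ∈ Kc ∧ σ.card = c}

/-- Basis chains attached to a set of faces. -/
def sset (A : Set (Finset (Fin 3))) : Set (Ch k) :=
  (fun σ => Finsupp.single σ (1:k)) '' A

/-- The chain group `C̃_{c-1}(K;k)`, as the span of its card-`c` faces. -/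
def chains (Kc : Set (Finset (Fin 3))) (c : ℕ) : Submodule k (Ch k) :=
  Submodule.span k (sset k (faces Kc c))

/-- The boundaries `B̃_{c-1}(K;k) = ∂ C̃_c(K;k)`, sitting among card-`c` chains. -/
def bdries (Kc : Set (Finset (Fin 3))) (c : ℕ) : Submodule k (Ch k) :=
  (chains k Kc (c+1)).map (bdry k)

/-- A shrubbery in dimension `c-1` (faces of cardinality `c`): a set `T` of card-`c`
faces whose boundaries form a basis of `∂ C̃_{c-1}(K;k)`. -/
def IsShrubbery (Kc : Set (Finset (Fin 3))) (c : ℕ) (T : Finset (Finset (Fin 3))) : Prop :=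
  (T : Set (Finset (Fin 3))) ⊆ faces Kc c ∧
  LinearIndependent k
    (fun σ : (T : Set (Finset (Fin 3))) => bdry k (Finsupp.single (σ : Finset (Fin 3)) (1:k))) ∧
  Submodule.span k ((fun σ => bdry k (Finsupp.single σ (1:k))) '' (T : Set (Finset (Fin 3)))) =
    (chains k Kc c).map (bdry k)

/-- A stake set in dimension `c-1` (faces of cardinality `c`): a set `S` of card-`c`
faces whose complement maps to a basis of `C̃/B̃`. -/
def IsStakeSet (Kc : Set (Finset (Fin 3))) (c : ℕ) (S : Finset (Finset (Fin 3))) : Prop :=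
  (S : Set (Finset (Fin 3))) ⊆ faces Kc c ∧
  Submodule.span k (sset k (faces Kc c \ (S : Set (Finset (Fin 3))))) ⊓ bdries k Kc c = ⊥ ∧
  Submodule.span k (sset k (faces Kc c \ (S : Set (Finset (Fin 3))))) ⊔ bdries k Kc c =
    chains k Kc c

/-- The circuit `ζ(τ)` of a face `τ` with respect to a shrubbery `T`:
the unique cycle of the form `τ - t` with `t ∈ span T`. -/
def circuit (T : Finset (Finset (Fin 3))) (τ : Finset (Fin 3)) : Ch k :=
  if h : ∃! z : Ch k, bdry k z = 0 ∧
      Finsupp.single τ (1:k) - z ∈ Submodule.span k (sset k (T : Set (Finset (Fin 3))))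
  then h.exists.choose else 0

/-- The shrub `s(σ)` of a stake `σ` with respect to a hedge `(S,T)`:
the unique chain in `span T` whose boundary has coefficient `1` on `σ` and `0`
on all other stakes. -/
def shrub (S T : Finset (Finset (Fin 3))) (σ : Finset (Fin 3)) : Ch k :=
  if h : ∃! s : Ch k, s ∈ Submodule.span k (sset k (T : Set (Finset (Fin 3)))) ∧
      bdry k s σ = 1 ∧ ∀ σ' ∈ S, σ' ≠ σ → bdry k s σ' = 0
  then h.exists.choose else 0

/-- The hedge rim `r(τ)` of a face `τ` with respect to a stake set `S`:
the unique chain supported outside `S` with `τ - r(τ)` a boundary. -/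
def hedgeRim (Kc : Set (Finset (Fin 3))) (c : ℕ) (S : Finset (Finset (Fin 3)))
    (τ : Finset (Fin 3)) : Ch k :=
  if h : ∃! r : Ch k,
      r ∈ Submodule.span k (sset k (faces Kc c \ (S : Set (Finset (Fin 3))))) ∧
      Finsupp.single τ (1:k) - r ∈ bdries k Kc c
  then h.exists.choose else 0

/-- The points of the saturated decreasing lattice path from `pt a d n` down to `a`
encoded by the list of directions `d` (read from `a` upwards). -/
def pt (a : V3) {n : ℕ} (d : Fin n → Fin 3) (m : ℕ) : V3 :=
  fun i => a i + ∑ m' ∈ Finset.range m, (if h : m' < n then stdVec (d ⟨m', h⟩) i else 0)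

/-- The data of a hedgerow: `(Sb, S, T, Ta)`. -/
abbrev HRData (n : ℕ) :=
  Finset (Finset (Fin 3)) × (Fin (n+1) → Finset (Finset (Fin 3))) ×
    (Fin (n+1) → Finset (Finset (Fin 3))) × Finset (Finset (Fin 3))

/-- A hedgerow in homological dimension `c-1` along the lattice path from `pt a d n`
down to `a`: a stake set in the Koszul complex at the top, a hedge at each interior
lattice point, and a shrubbery at the bottom.  (Unused components are pinned to `∅`.) -/
def IsHedgerow (I : Set V3) (a : V3) {n : ℕ} (d : Fin n → Fin 3) (c : ℕ)
    (h : HRData n) : Prop :=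
  IsStakeSet k (K I (pt a d n)) c h.1 ∧
  (∀ m : Fin (n+1), 0 < (m:ℕ) → (m:ℕ) < n →
    IsStakeSet k (K I (pt a d m)) (c-1) (h.2.1 m) ∧
    IsShrubbery k (K I (pt a d m)) c (h.2.2.1 m)) ∧
  (∀ m : Fin (n+1), ((m:ℕ) = 0 ∨ (m:ℕ) = n) → h.2.1 m = ∅ ∧ h.2.2.1 m = ∅) ∧
  IsShrubbery k (K I a) (c-1) h.2.2.2

/-- `Δ_{c-1,λ} I`: the number of hedgerows along the lattice path. -/
def Delta (I : Set V3) (a : V3) {n : ℕ} (d : Fin n → Fin 3) (c : ℕ) : ℕ :=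
  Nat.card {h : HRData n // IsHedgerow k I a d c h}

/-- The data of a chain-link fence: a hedgerow together with the faces `τ_ℓ` and
`σ_ℓ` (indexed here by the lattice point `pt a d m`, so `τ_ℓ = tau (n-ℓ)` and
`σ_ℓ = sig (n-ℓ)`). -/
abbrev FData (n : ℕ) :=
  HRData n × (Fin (n+1) → Finset (Fin 3)) × (Fin (n+1) → Finset (Fin 3))

/-- A chain-link fence from the card-`c` face `τtop` of the Koszul complex at the top
of the lattice path to the card-`(c-1)` face `σbot` of the Koszul complex at the
bottom. -/
def IsFence (I : Set V3) (a : V3) {n : ℕ} (d : Fin n → Fin 3) (c : ℕ)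
    (σbot τtop : Finset (Fin 3)) (f : FData n) : Prop :=
  IsHedgerow k I a d c f.1 ∧
  (∀ m : Fin (n+1), 0 < (m:ℕ) → f.2.1 m ∈ faces (K I (pt a d m)) c) ∧
  (∀ m : Fin (n+1), (m:ℕ) < n → f.2.2 m ∈ faces (K I (pt a d m)) (c-1)) ∧
  f.2.1 0 = ∅ ∧ f.2.2 (Fin.last n) = ∅ ∧
  hedgeRim k (K I (pt a d n)) c f.1.1 τtop (f.2.1 (Fin.last n)) ≠ 0 ∧
  (∀ m : Fin n, f.2.2 m.castSucc = (f.2.1 m.succ).erase (d m)) ∧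
  (∀ m : Fin (n+1), 0 < (m:ℕ) → (m:ℕ) < n →
    f.2.2 m ∈ f.1.2.1 m ∧
    shrub k (f.1.2.1 m) (f.1.2.2.1 m) (f.2.2 m) (f.2.1 m) ≠ 0) ∧
  circuit k f.1.2.2.2 (f.2.2 0) σbot ≠ 0

/-- The weight of a chain-link fence: the product of the boundary-link coefficient,
the chain-link coefficients, the containment coefficients, and the cycle-link
coefficient. -/
def weight (I : Set V3) (a : V3) {n : ℕ} (d : Fin n → Fin 3) (c : ℕ)
    (σbot τtop : Finset (Fin 3)) (f : FData n) : k :=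
  hedgeRim k (K I (pt a d n)) c f.1.1 τtop (f.2.1 (Fin.last n)) *
  (∏ m : Fin (n+1), if 0 < (m:ℕ) ∧ (m:ℕ) < n
      then shrub k (f.1.2.1 m) (f.1.2.2.1 m) (f.2.2 m) (f.2.1 m) else 1) *
  (∏ m : Fin n, bdry k (Finsupp.single (f.2.1 m.succ) (1:k)) (f.2.2 m.castSucc)) *
  circuit k f.1.2.2.2 (f.2.2 0) σbot

/-- `D_{σ,τ}^{a,b,λ}`: the contribution of the single lattice path `λ` (encoded by
its direction sequence `d`) to the canonical sylvan matrix entry. -/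
def Dpath (I : Set V3) (a : V3) {n : ℕ} (d : Fin n → Fin 3) (c : ℕ)
    (σbot τtop : Finset (Fin 3)) : k :=
  ((Delta k I a d c : k))⁻¹ *
    ∑ᶠ f ∈ {f : FData n | IsFence k I a d c σbot τtop f}, weight k I a d c σbot τtop f

/-- `|b - a|`, the common length of all saturated decreasing lattice paths. -/
def nlen (a b : V3) : ℕ := ∑ i, (b i - a i)

/-- The canonical sylvan matrix entry `D_{σ,τ}^{a,b}`: a sum over all saturated
decreasing lattice paths from `b` to `a`. -/
def D (I : Set V3) (a b : V3) (c : ℕ) (σbot τtop : Finset (Fin 3)) : k :=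
  ∑ᶠ d ∈ {d : Fin (nlen a b) → Fin 3 | pt a d (nlen a b) = b},
    Dpath k I a d c σbot τtop

/-- `K` has exactly the set `F` as facets, i.e. it is the downward closure of `F`. -/
def hasFacets (Kc F : Set (Finset (Fin 3))) : Prop :=
  Kc = {σ | ∃ f ∈ F, σ ⊆ f}

/-- `dim_k H̃₀(K;k) ≠ 0`: some reduced 0-cycle is not a boundary. -/
def H0nontrivial (Kc : Set (Finset (Fin 3))) : Prop :=
  ¬ (chains k Kc 1 ⊓ LinearMap.ker (bdry k) ≤ bdries k Kc 1)

section Aux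

variable (k : Type) [Field k]

lemma sset_eq (A : Set (Finset (Fin 3))) :
    sset k A = (fun σ => Finsupp.single σ (1:k)) '' A := rfl

lemma span_sset (A : Set (Finset (Fin 3))) :
    Submodule.span k (sset k A) = Finsupp.supported k k A :=
  (Finsupp.supported_eq_span_single k A).symm

lemma mem_span_sset {A : Set (Finset (Fin 3))} {x : Ch k} :
    x ∈ Submodule.span k (sset k A) ↔ ↑x.support ⊆ A := by
  rw [span_sset, Finsupp.mem_supported]

lemma bdry_single (σ : Finset (Fin 3)) (c : k) :
    bdry k (Finsupp.single σ c) = c • bd k σ := by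
  simp [bdry, LinearMap.toSpanSingleton_apply]

lemma bd_vertex (v : Fin 3) : bd k {v} = Finsupp.single ∅ (1:k) := by
  simp [bd, esgn, Finset.filter_singleton]

lemma erase_pair_left {u w : Fin 3} (h : u ≠ w) : ({u, w} : Finset (Fin 3)).erase u = {w} := by
  rw [Finset.erase_insert]; simp [h]

lemma erase_pair_right {u w : Fin 3} (h : u ≠ w) : ({u, w} : Finset (Fin 3)).erase w = {u} := by
  rw [Finset.pair_comm, Finset.erase_insert]; simp [h.symm]

lemma bd_pair {u w : Fin 3} (h : u ≠ w) :
    bd k {u, w} = Finsupp.single {w} ((esgn u {u, w} : ℤ) : k)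
      + Finsupp.single {u} ((esgn w {u, w} : ℤ) : k) := by
  rw [bd, Finset.sum_pair h, erase_pair_left h, erase_pair_right h]

lemma esgn_pair_neg : ∀ u w : Fin 3, u ≠ w → esgn u {u, w} = - esgn w {u, w} := by decide

lemma coeffSign_pair {u w : Fin 3} (h : u ≠ w) :
    coeffSign k u {u, w} = ((esgn u {u, w} : ℤ) : k) := by
  rw [coeffSign, bdry_single, erase_pair_left h, bd_pair k h]
  have : ({u} : Finset (Fin 3)) ≠ {w} := by simpa using h
  simp [Finsupp.single_apply, this.symm, h]

lemma coeffSign_pair_neg {u w : Fin 3} (h : u ≠ w) :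
    coeffSign k u {u, w} = - coeffSign k w {u, w} := by
  have hset : ({u, w} : Finset (Fin 3)) = {w, u} := Finset.pair_comm u w
  rw [coeffSign_pair k h, hset, coeffSign_pair k h.symm, ← hset, esgn_pair_neg u w h]
  push_cast
  ring

lemma pair_cases : ∀ i j l : Fin 3, i ≠ j → i ≠ l → j ≠ l →
    ∀ σ : Finset (Fin 3), σ.card = 2 → σ = {i, j} ∨ σ = {i, l} ∨ σ = {j, l} := by decide

lemma vert_cases : ∀ i j l v : Fin 3, i ≠ j → i ≠ l → j ≠ l →
    v = i ∨ v = j ∨ v = l := by decide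

end Aux
section Aux2

variable (k : Type) [Field k]
variable {I : Set V3} {a b : V3} {i j l : Fin 3}

lemma faces_b2 (hij : i ≠ j) (hil : i ≠ l) (hjl : j ≠ l)
    (hKb : hasFacets (K I b) {{i, j}, {i, l}, {j, l}}) :
    faces (K I b) 2 = {σ | σ.card = 2} := by
  rw [hasFacets] at hKb
  ext σ
  simp only [faces, Set.mem_setOf_eq, hKb]
  constructor
  · rintro ⟨-, hc⟩; exact hc
  · intro hc
    refine ⟨?_, hc⟩
    rcases pair_cases i j l hij hil hjl σ hc with h | h | h <;> subst h
    · exact ⟨{i, j}, by simp, subset_rfl⟩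
    · exact ⟨{i, l}, by simp, subset_rfl⟩
    · exact ⟨{j, l}, by simp, subset_rfl⟩

lemma faces_b3 (hij : i ≠ j) (hil : i ≠ l) (hjl : j ≠ l) (hKb : hasFacets (K I b) {{i, j}, {i, l}, {j, l}}) :
    faces (K I b) 3 = ∅ := by
  rw [hasFacets] at hKb
  ext σ
  simp only [faces, Set.mem_setOf_eq, hKb, Set.mem_empty_iff_false, iff_false, not_and]
  rintro ⟨f, hf, hsub⟩ hc
  have hcard : f.card = 2 := by
    simp only [Set.mem_insert_iff, Set.mem_singleton_iff] at hf
    rcases hf with h | h | h <;> subst h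
    · exact Finset.card_pair hij
    · exact Finset.card_pair hil
    · exact Finset.card_pair hjl
  have := Finset.card_le_card hsub
  omega

lemma faces_a1 (hij : i ≠ j) (hil : i ≠ l) (hjl : j ≠ l)
    (hKa : hasFacets (K I a) {{i, j}, {l}} ∨ hasFacets (K I a) {{i}, {j}, {l}}) :
    faces (K I a) 1 = {σ | σ.card = 1} := by
  ext σ
  simp only [faces, Set.mem_setOf_eq]
  constructor
  · rintro ⟨-, hc⟩; exact hc
  · intro hc
    refine ⟨?_, hc⟩
    obtain ⟨v, rfl⟩ := Finset.card_eq_one.mp hc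
    rcases hKa with hKa | hKa <;> rw [hasFacets] at hKa <;> rw [hKa]
    · rcases vert_cases i j l v hij hil hjl with rfl | rfl | rfl
      · exact ⟨{v, j}, by simp, by simp⟩
      · exact ⟨{i, v}, by simp, by simp⟩
      · exact ⟨{v}, by simp, by simp⟩
    · rcases vert_cases i j l v hij hil hjl with rfl | rfl | rfl
      · exact ⟨{v}, by simp, by simp⟩
      · exact ⟨{v}, by simp, by simp⟩
      · exact ⟨{v}, by simp, by simp⟩

lemma bdries_b2_bot (hb3 : faces (K I b) 3 = ∅) :
    bdries k (K I b) 2 = ⊥ := by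
  rw [bdries, chains, hb3]
  simp [sset]

lemma map_chains_a1 (ha1 : faces (K I a) 1 = {σ | σ.card = 1}) :
    (chains k (K I a) 1).map (bdry k) = Submodule.span k {Finsupp.single ∅ (1:k)} := by
  rw [chains, Submodule.map_span]
  congr 1
  ext x
  constructor
  · rintro ⟨y, ⟨σ, hσ, rfl⟩, rfl⟩
    rw [ha1] at hσ
    obtain ⟨v, rfl⟩ := Finset.card_eq_one.mp hσ
    simp [bdry_single, bd_vertex]
  · intro hx
    rw [Set.mem_singleton_iff] at hx
    subst hx
    refine ⟨Finsupp.single {0} 1, ⟨{0}, ?_, rfl⟩, by simp [bdry_single, bd_vertex]⟩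
    rw [ha1]; simp

lemma stake_iff (hb2 : faces (K I b) 2 = {σ | σ.card = 2})
    (hbd : bdries k (K I b) 2 = ⊥) (S : Finset (Finset (Fin 3))) :
    IsStakeSet k (K I b) 2 S ↔ S = ∅ := by
  constructor
  · rintro ⟨hsub, -, hsup⟩
    rw [hbd, sup_bot_eq] at hsup
    rw [Finset.eq_empty_iff_forall_notMem]
    intro σ hσ
    have hmem : Finsupp.single σ (1:k) ∈ chains k (K I b) 2 :=
      Submodule.subset_span ⟨σ, hsub hσ, rfl⟩
    rw [← hsup, mem_span_sset] at hmem
    rw [Finsupp.support_single_ne_zero σ one_ne_zero] at hmem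
    exact (hmem (show σ ∈ (↑({σ} : Finset (Finset (Fin 3))) : Set (Finset (Fin 3))) by simp)).2 hσ
  · rintro rfl
    refine ⟨by simp, by rw [hbd]; exact inf_bot_eq _, ?_⟩
    rw [hbd, sup_bot_eq, chains]
    simp

lemma hedgeRim_eq (hbd : bdries k (K I b) 2 = ⊥) {τ : Finset (Fin 3)}
    (hτ : τ ∈ faces (K I b) 2) :
    hedgeRim k (K I b) 2 ∅ τ = Finsupp.single τ 1 := by
  have hP : (Finsupp.single τ (1:k)) ∈
        Submodule.span k (sset k (faces (K I b) 2 \ ((∅ : Finset (Finset (Fin 3))) : Set (Finset (Fin 3))))) ∧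
      Finsupp.single τ (1:k) - Finsupp.single τ (1:k) ∈ bdries k (K I b) 2 := by
    constructor
    · rw [mem_span_sset, Finsupp.support_single_ne_zero τ one_ne_zero]
      simp [hτ]
    · simp
  have h : ∃! r : Ch k,
      r ∈ Submodule.span k (sset k (faces (K I b) 2 \ ((∅ : Finset (Finset (Fin 3))) : Set (Finset (Fin 3))))) ∧
      Finsupp.single τ (1:k) - r ∈ bdries k (K I b) 2 := by
    refine ⟨Finsupp.single τ 1, hP, ?_⟩
    rintro y ⟨-, hy⟩
    rw [hbd, Submodule.mem_bot, sub_eq_zero] at hy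
    exact hy.symm
  rw [hedgeRim, dif_pos h]
  exact h.unique h.exists.choose_spec hP

end Aux2
section Aux3

variable (k : Type) [Field k]
variable {I : Set V3} {a : V3}

lemma bdry_vertex_single (v : Fin 3) :
    bdry k (Finsupp.single ({v} : Finset (Fin 3)) (1:k)) = Finsupp.single ∅ 1 := by
  rw [bdry_single, bd_vertex, one_smul]

lemma shrubbery_iff (ha1 : faces (K I a) 1 = {σ | σ.card = 1})
    (T : Finset (Finset (Fin 3))) :
    IsShrubbery k (K I a) 1 T ↔ ∃ v : Fin 3, T = {({v} : Finset (Fin 3))} := by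
  have hmap := map_chains_a1 k ha1
  constructor
  · rintro ⟨hsub, hli, hspan⟩
    have hcard1 : ∀ σ ∈ T, σ.card = 1 := by
      intro σ hσ
      have := hsub (Finset.mem_coe.mpr hσ)
      rw [ha1] at this
      exact this
    have hval : ∀ σ ∈ T, bdry k (Finsupp.single σ (1:k)) = Finsupp.single ∅ 1 := by
      intro σ hσ
      obtain ⟨v, rfl⟩ := Finset.card_eq_one.mp (hcard1 σ hσ)
      exact bdry_vertex_single k v
    have hne : T.Nonempty := by
      rcases T.eq_empty_or_nonempty with rfl | h
      · exfalso
        rw [hmap] at hspan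
        simp only [Finset.coe_empty, Set.image_empty, Submodule.span_empty] at hspan
        have : Finsupp.single (∅ : Finset (Fin 3)) (1:k) ∈ (⊥ : Submodule k (Ch k)) := by
          rw [hspan]; exact Submodule.subset_span rfl
        rw [Submodule.mem_bot] at this
        exact one_ne_zero (Finsupp.single_eq_zero.mp this)
      · exact h
    obtain ⟨σ, hσ⟩ := hne
    have huniq : ∀ τ ∈ T, τ = σ := by
      intro τ hτ
      have heq : (⟨τ, Finset.mem_coe.mpr hτ⟩ : (T : Set (Finset (Fin 3))))
          = ⟨σ, Finset.mem_coe.mpr hσ⟩ := by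
        apply hli.injective
        show bdry k (Finsupp.single τ (1:k)) = bdry k (Finsupp.single σ (1:k))
        rw [hval τ hτ, hval σ hσ]
      exact Subtype.ext_iff.mp heq
    obtain ⟨v, rfl⟩ := Finset.card_eq_one.mp (hcard1 σ hσ)
    exact ⟨v, Finset.eq_singleton_iff_unique_mem.mpr ⟨hσ, huniq⟩⟩
  · rintro ⟨v, rfl⟩
    have hcoe : ((({({v} : Finset (Fin 3))} : Finset (Finset (Fin 3)))) : Set (Finset (Fin 3)))
        = {({v} : Finset (Fin 3))} := Finset.coe_singleton _
    refine ⟨?_, ?_, ?_⟩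
    · rw [hcoe, ha1]
      rintro σ rfl
      simp
    · haveI : Unique ((({({v} : Finset (Fin 3))} : Finset (Finset (Fin 3)))) : Set (Finset (Fin 3))) := by
        rw [hcoe]; exact Set.uniqueSingleton _
      apply linearIndependent_unique_iff.mpr
      have hd : ((default : ((({({v} : Finset (Fin 3))} : Finset (Finset (Fin 3)))) : Set (Finset (Fin 3)))) : Finset (Fin 3)) = {v} := by
        have := (default : ((({({v} : Finset (Fin 3))} : Finset (Finset (Fin 3)))) : Set (Finset (Fin 3)))).2
        simpa using this
      rw [hd, bdry_vertex_single]
      intro hcon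
      exact one_ne_zero (Finsupp.single_eq_zero.mp hcon)
    · rw [hmap, hcoe, Set.image_singleton, bdry_vertex_single]

lemma circuit_eq (v t : Fin 3) :
    circuit k {({t} : Finset (Fin 3))} {v}
      = Finsupp.single ({v} : Finset (Fin 3)) (1:k) - Finsupp.single {t} 1 := by
  have hcoe : sset k ((({({t} : Finset (Fin 3))} : Finset (Finset (Fin 3)))) : Set (Finset (Fin 3)))
      = {Finsupp.single ({t} : Finset (Fin 3)) (1:k)} := by
    rw [sset_eq, Finset.coe_singleton, Set.image_singleton]
  set z0 : Ch k := Finsupp.single ({v} : Finset (Fin 3)) (1:k) - Finsupp.single {t} 1 with hz0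
  have hP : bdry k z0 = 0 ∧ Finsupp.single ({v} : Finset (Fin 3)) (1:k) - z0 ∈
      Submodule.span k (sset k ((({({t} : Finset (Fin 3))} : Finset (Finset (Fin 3)))) : Set (Finset (Fin 3)))) := by
    constructor
    · rw [hz0, map_sub, bdry_vertex_single, bdry_vertex_single, sub_self]
    · rw [hcoe, hz0]
      have : Finsupp.single ({v} : Finset (Fin 3)) (1:k) -
          (Finsupp.single ({v} : Finset (Fin 3)) (1:k) - Finsupp.single {t} 1)
          = Finsupp.single {t} 1 := by abel
      rw [this]
      exact Submodule.subset_span rfl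
  have h : ∃! z : Ch k, bdry k z = 0 ∧ Finsupp.single ({v} : Finset (Fin 3)) (1:k) - z ∈
      Submodule.span k (sset k ((({({t} : Finset (Fin 3))} : Finset (Finset (Fin 3)))) : Set (Finset (Fin 3)))) := by
    refine ⟨z0, hP, ?_⟩
    rintro y ⟨hy1, hy2⟩
    rw [hcoe, Submodule.mem_span_singleton] at hy2
    obtain ⟨c, hc⟩ := hy2
    have hy : y = Finsupp.single ({v} : Finset (Fin 3)) (1:k) - c • Finsupp.single {t} 1 := by
      rw [hc]; abel
    have hc1 : c = 1 := by
      have hb : (0 : Ch k) = (1 - c) • Finsupp.single (∅ : Finset (Fin 3)) (1:k) := by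
        rw [← hy1, hy, map_sub, map_smul, bdry_vertex_single, bdry_vertex_single]
        module
      have h0 : (0:k) = 1 - c := by
        have := congrArg (fun f : Ch k => f ∅) hb
        simpa using this
      have := sub_eq_zero.mp h0.symm
      exact this.symm
    rw [hy, hc1, one_smul, hz0]
  rw [circuit, dif_pos h]
  exact h.unique h.exists.choose_spec hP

end Aux3
section Aux4

variable (k : Type) [Field k]
variable {I : Set V3} {a b : V3} {i j l : Fin 3}

lemma pt_zero {n : ℕ} (d : Fin n → Fin 3) : pt a d 0 = a := by
  funext q; simp [pt]

lemma pt_one (d : Fin 1 → Fin 3) (q : Fin 3) : pt a d 1 q = a q + stdVec (d 0) q := by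
  simp [pt]

lemma pt_one_eq_b (hB : ∀ q, b q = a q + stdVec i q) :
    pt a (fun _ : Fin 1 => i) 1 = b := by
  funext q; rw [pt_one, hB q]

lemma path_set (hB : ∀ q, b q = a q + stdVec i q) :
    {d : Fin 1 → Fin 3 | pt a d 1 = b} = {(fun _ : Fin 1 => i)} := by
  ext d
  simp only [Set.mem_setOf_eq, Set.mem_singleton_iff]
  constructor
  · intro h
    have h0 : d 0 = i := by
      by_contra hne
      have hq := congrFun h (d 0)
      rw [pt_one, hB (d 0)] at hq
      have e1 : stdVec (d 0) (d 0) = 1 := by simp [stdVec]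
      have e2 : stdVec i (d 0) = 0 := by simp [stdVec, hne]
      rw [e1, e2] at hq
      omega
    funext m
    have hm : m = 0 := Subsingleton.elim m 0
    rw [hm, h0]
  · rintro rfl
    exact pt_one_eq_b hB

lemma fin2_or (m : Fin 2) : (m : ℕ) = 0 ∨ (m : ℕ) = 1 := by
  have := m.isLt; omega

lemma hedgerow_iff (hb2 : faces (K I b) 2 = {σ | σ.card = 2})
    (hbd : bdries k (K I b) 2 = ⊥)
    (ha1 : faces (K I a) 1 = {σ | σ.card = 1})
    (hB : ∀ q, b q = a q + stdVec i q)
    (h : HRData 1) :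
    IsHedgerow k I a (fun _ : Fin 1 => i) 2 h ↔
      h.1 = ∅ ∧ h.2.1 = (fun _ => ∅) ∧ h.2.2.1 = (fun _ => ∅) ∧
        ∃ v : Fin 3, h.2.2.2 = {({v} : Finset (Fin 3))} := by
  have hpt1 := pt_one_eq_b (i := i) hB
  constructor
  · rintro ⟨hs, -, hpin, hsh⟩
    rw [hpt1, stake_iff k hb2 hbd] at hs
    refine ⟨hs, ?_, ?_, (shrubbery_iff k ha1 _).mp hsh⟩
    · funext m; exact (hpin m (fin2_or m)).1
    · funext m; exact (hpin m (fin2_or m)).2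
  · rintro ⟨h1, h2, h3, v, h4⟩
    refine ⟨?_, ?_, ?_, ?_⟩
    · rw [hpt1, stake_iff k hb2 hbd]; exact h1
    · intro m hm0 hm1; omega
    · intro m _; exact ⟨congrFun h2 m, congrFun h3 m⟩
    · rw [h4, shrubbery_iff k ha1]; exact ⟨v, rfl⟩

/-- The hedgerow attached to a choice of bottom vertex. -/
def eHR (v : Fin 3) : HRData 1 :=
  (∅, fun _ => ∅, fun _ => ∅, {({v} : Finset (Fin 3))})

lemma delta_eq (hb2 : faces (K I b) 2 = {σ | σ.card = 2})
    (hbd : bdries k (K I b) 2 = ⊥)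
    (ha1 : faces (K I a) 1 = {σ | σ.card = 1})
    (hB : ∀ q, b q = a q + stdVec i q) :
    Delta k I a (fun _ : Fin 1 => i) 2 = 3 := by
  have hset : {h : HRData 1 | IsHedgerow k I a (fun _ : Fin 1 => i) 2 h} = Set.range eHR := by
    ext h
    simp only [Set.mem_setOf_eq, hedgerow_iff k hb2 hbd ha1 hB, Set.mem_range]
    constructor
    · obtain ⟨A, B', C, E⟩ := h
      rintro ⟨h1, h2, h3, v, h4⟩
      simp only at h1 h2 h3 h4
      subst h1; subst h2; subst h3; subst h4
      exact ⟨v, rfl⟩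
    · rintro ⟨v, rfl⟩
      exact ⟨rfl, rfl, rfl, v, rfl⟩
  have hinj : Function.Injective eHR := by
    intro v w h
    have := congrArg (fun x : HRData 1 => x.2.2.2) h
    simp only [eHR] at this
    have h2 := Finset.singleton_injective this
    exact Finset.singleton_injective h2
  rw [Delta]
  calc Nat.card {h : HRData 1 // IsHedgerow k I a (fun _ : Fin 1 => i) 2 h}
      = Nat.card (Set.range eHR) := Nat.card_congr (Equiv.setCongr hset)
    _ = Nat.card (Fin 3) := Nat.card_range_of_injective hinj
    _ = 3 := by simp

end Aux4
section Aux5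

variable (k : Type) [Field k]
variable {I : Set V3} {a b : V3} {i u : Fin 3}

/-- The chain-link fence attached to a choice of bottom vertex. -/
def eF (i u : Fin 3) (v : Fin 3) : FData 1 :=
  (eHR v, fun m => if m = 0 then ∅ else ({i, u} : Finset (Fin 3)),
    fun m => if m = 0 then ({u} : Finset (Fin 3)) else ∅)

lemma last_one : Fin.last 1 = (1 : Fin 2) := rfl

lemma coeffSign_eval (hiu : i ≠ u) :
    bdry k (Finsupp.single ({i, u} : Finset (Fin 3)) (1:k)) {u} = coeffSign k i {i, u} := by
  rw [coeffSign, erase_pair_left hiu]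

lemma fence_set (hb2 : faces (K I b) 2 = {σ | σ.card = 2})
    (hbd : bdries k (K I b) 2 = ⊥)
    (ha1 : faces (K I a) 1 = {σ | σ.card = 1})
    (hB : ∀ q, b q = a q + stdVec i q)
    (hiu : i ≠ u) (σbot : Finset (Fin 3)) :
    {f : FData 1 | IsFence k I a (fun _ : Fin 1 => i) 2 σbot {i, u} f}
      = eF i u '' {v : Fin 3 | circuit k {({v} : Finset (Fin 3))} {u} σbot ≠ 0} := by
  have hpt1 := pt_one_eq_b (i := i) hB
  have hfiu : ({i, u} : Finset (Fin 3)) ∈ faces (K I b) 2 := by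
    rw [hb2]; exact Finset.card_pair hiu
  have hRim := hedgeRim_eq k hbd hfiu
  ext f
  obtain ⟨hr, tau, sig⟩ := f
  simp only [Set.mem_setOf_eq, Set.mem_image]
  constructor
  · rintro ⟨hhr, htauf, hsigf, htau0, hsig1, hrim, hlink, -, hcirc⟩
    simp only at htau0 hsig1 hrim hlink hcirc htauf hsigf
    rw [hedgerow_iff k hb2 hbd ha1 hB] at hhr
    obtain ⟨h1, h2, h3, v, h4⟩ := hhr
    simp only at h1 h2 h3 h4
    have htau1 : tau (Fin.last 1) = {i, u} := by
      by_contra hne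
      apply hrim
      rw [hpt1, h1, hRim, Finsupp.single_apply, if_neg (fun hh => hne hh.symm)]
    have hsig0 : sig 0 = {u} := by
      have := hlink 0
      rw [show (0 : Fin 1).castSucc = 0 from rfl, show (0 : Fin 1).succ = 1 from rfl] at this
      rw [this, show tau 1 = {i, u} from htau1, erase_pair_left hiu]
    refine ⟨v, ?_, ?_⟩
    · show circuit k {({v} : Finset (Fin 3))} {u} σbot ≠ 0
      rw [← h4, ← hsig0]
      exact hcirc
    · obtain ⟨A, B', C, E⟩ := hr
      simp only at h1 h2 h3 h4
      subst h1; subst h2; subst h3; subst h4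
      refine congrArg₂ Prod.mk rfl (congrArg₂ Prod.mk ?_ ?_)
      · funext m
        fin_cases m
        · simpa using htau0.symm
        · simpa using htau1.symm
      · funext m
        fin_cases m
        · simpa using hsig0.symm
        · simpa using hsig1.symm
  · rintro ⟨v, hv, heq⟩
    have hv' : circuit k {({v} : Finset (Fin 3))} {u} σbot ≠ 0 := hv
    rw [← heq]
    refine ⟨?_, ?_, ?_, ?_, ?_, ?_, ?_, ?_, ?_⟩
    · rw [hedgerow_iff k hb2 hbd ha1 hB]
      exact ⟨rfl, rfl, rfl, v, rfl⟩
    · intro m hm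
      have hm' : m = 1 := by
        have := fin2_or m
        apply Fin.ext
        simp only [Fin.val_one]
        omega
      subst hm'
      show (if (1 : Fin 2) = 0 then ∅ else ({i, u} : Finset (Fin 3))) ∈ _
      rw [if_neg one_ne_zero]
      rw [show pt a (fun _ : Fin 1 => i) ((1 : Fin 2) : ℕ) = b from hpt1, hb2]
      exact Finset.card_pair hiu
    · intro m hm
      have hm' : m = 0 := by
        apply Fin.ext
        simp only [Fin.val_zero]
        omega
      subst hm'
      show (if (0 : Fin 2) = 0 then ({u} : Finset (Fin 3)) else ∅) ∈ _
      rw [if_pos rfl]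
      rw [show pt a (fun _ : Fin 1 => i) ((0 : Fin 2) : ℕ) = a from pt_zero _, ha1]
      exact Finset.card_singleton _
    · simp [eF]
    · simp [eF, last_one]
    · show (hedgeRim k (K I (pt a (fun _ : Fin 1 => i) 1)) 2 (eF i u v).1.1 {i, u})
        ((eF i u v).2.1 (Fin.last 1)) ≠ 0
      rw [show (eF i u v).1.1 = ∅ from rfl,
        show (eF i u v).2.1 (Fin.last 1) = ({i, u} : Finset (Fin 3)) by simp [eF, last_one],
        show pt a (fun _ : Fin 1 => i) 1 = b from hpt1, hRim, Finsupp.single_eq_same]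
      exact one_ne_zero
    · intro m
      have hm : m = 0 := Subsingleton.elim m 0
      subst hm
      show (if (0 : Fin 1).castSucc = 0 then ({u} : Finset (Fin 3)) else ∅)
        = (if (0 : Fin 1).succ = 0 then ∅ else ({i, u} : Finset (Fin 3))).erase ((fun _ : Fin 1 => i) 0)
      rw [show (0 : Fin 1).castSucc = 0 from rfl, show (0 : Fin 1).succ = 1 from rfl,
        if_pos rfl, if_neg one_ne_zero]
      exact (erase_pair_left hiu).symm
    · intro m h0 h1
      have := fin2_or m
      omega
    · exact fun hc => hv' (by simpa [eF, eHR] using hc)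

lemma weight_eF (hbd : bdries k (K I b) 2 = ⊥)
    (hb2 : faces (K I b) 2 = {σ | σ.card = 2})
    (hB : ∀ q, b q = a q + stdVec i q)
    (hiu : i ≠ u) (σbot : Finset (Fin 3)) (v : Fin 3) :
    weight k I a (fun _ : Fin 1 => i) 2 σbot {i, u} (eF i u v)
      = coeffSign k i {i, u} * circuit k {({v} : Finset (Fin 3))} {u} σbot := by
  have hpt1 := pt_one_eq_b (i := i) hB
  have hfiu : ({i, u} : Finset (Fin 3)) ∈ faces (K I b) 2 := by
    rw [hb2]; exact Finset.card_pair hiu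
  have hRim := hedgeRim_eq k hbd hfiu
  rw [weight]
  have e1 : hedgeRim k (K I (pt a (fun _ : Fin 1 => i) 1)) 2 (eF i u v).1.1 {i, u}
      ((eF i u v).2.1 (Fin.last 1)) = 1 := by
    rw [hpt1, show (eF i u v).1.1 = ∅ from rfl, hRim]
    simp [eF, last_one]
  have e2 : (∏ m : Fin 2, if 0 < (m:ℕ) ∧ (m:ℕ) < 1
      then shrub k ((eF i u v).1.2.1 m) ((eF i u v).1.2.2.1 m) ((eF i u v).2.2 m)
        ((eF i u v).2.1 m) else 1) = 1 := by
    apply Finset.prod_eq_one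
    intro m _
    rw [if_neg]
    have := fin2_or m
    omega
  have e3 : (∏ m : Fin 1, bdry k (Finsupp.single ((eF i u v).2.1 m.succ) (1:k))
      ((eF i u v).2.2 m.castSucc)) = coeffSign k i {i, u} := by
    rw [Fin.prod_univ_one]
    rw [show (0 : Fin 1).castSucc = 0 from rfl, show (0 : Fin 1).succ = 1 from rfl]
    simp only [eF, one_ne_zero, if_false, if_pos rfl]
    exact coeffSign_eval k hiu
  rw [e1, e2, e3, one_mul, one_mul,
    show (eF i u v).1.2.2.2 = {({v} : Finset (Fin 3))} from rfl,
    show (eF i u v).2.2 0 = ({u} : Finset (Fin 3)) by simp [eF]]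

end Aux5
section Aux6

variable (k : Type) [Field k]
variable {I : Set V3} {a b : V3} {i u j l : Fin 3}

lemma eHR_inj : Function.Injective eHR := by
  intro v w h
  have := congrArg (fun x : HRData 1 => x.2.2.2) h
  simp only [eHR] at this
  exact Finset.singleton_injective (Finset.singleton_injective this)

lemma enum_others : ∀ u : Fin 3, ∃ p q : Fin 3,
    p ≠ q ∧ p ≠ u ∧ q ≠ u ∧ ∀ v : Fin 3, v = p ∨ v = q ∨ v = u := by decide

lemma eF_inj (i u : Fin 3) : Function.Injective (eF i u) := by
  intro v w h
  have h1 : (eF i u v).1 = (eF i u w).1 := congrArg Prod.fst h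
  exact eHR_inj h1

lemma circ_apply (u v w : Fin 3) :
    (circuit k {({v} : Finset (Fin 3))} {u}) {w}
      = (if u = w then (1:k) else 0) - (if v = w then (1:k) else 0) := by
  rw [circuit_eq k u v, Finsupp.sub_apply, Finsupp.single_apply, Finsupp.single_apply]
  simp [Finset.singleton_inj]

lemma fence_sum (hb2 : faces (K I b) 2 = {σ | σ.card = 2})
    (hbd : bdries k (K I b) 2 = ⊥)
    (ha1 : faces (K I a) 1 = {σ | σ.card = 1})
    (hB : ∀ q, b q = a q + stdVec i q)
    (hiu : i ≠ u) (w : Fin 3) :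
    ∑ᶠ f ∈ {f : FData 1 | IsFence k I a (fun _ : Fin 1 => i) 2 {w} {i, u} f},
      weight k I a (fun _ : Fin 1 => i) 2 {w} {i, u} f
    = if w = u then 2 * coeffSign k i {i, u} else - coeffSign k i {i, u} := by
  rw [fence_set k hb2 hbd ha1 hB hiu]
  have hinjOn : Set.InjOn (eF i u)
      {v : Fin 3 | circuit k {({v} : Finset (Fin 3))} {u} {w} ≠ 0} :=
    fun x _ y _ h => eF_inj i u h
  rw [finsum_mem_image hinjOn]
  have hw : ∀ v : Fin 3, weight k I a (fun _ : Fin 1 => i) 2 {w} {i, u} (eF i u v)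
      = coeffSign k i {i, u} * (circuit k {({v} : Finset (Fin 3))} {u}) {w} :=
    fun v => weight_eF k hbd hb2 hB hiu {w} v
  by_cases hwu : w = u
  · subst hwu
    obtain ⟨p, q, hpq, hpw, hqw, henum⟩ := enum_others w
    have hS : {v : Fin 3 | (circuit k {({v} : Finset (Fin 3))} {w}) {w} ≠ 0} = {p, q} := by
      ext v
      have hc : (circuit k {({v} : Finset (Fin 3))} {w}) {w}
          = 1 - (if v = w then (1:k) else 0) := by
        rw [circ_apply k, if_pos rfl]
      simp only [Set.mem_setOf_eq, hc, Set.mem_insert_iff, Set.mem_singleton_iff]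
      by_cases hvw : v = w
      · rw [if_pos hvw, sub_self]
        apply iff_of_false
        · simp
        · rintro (h | h)
          · exact hpw (h.symm.trans hvw)
          · exact hqw (h.symm.trans hvw)
      · rw [if_neg hvw, sub_zero]
        constructor
        · intro _
          rcases henum v with h | h | h
          · exact Or.inl h
          · exact Or.inr h
          · exact absurd h hvw
        · intro _
          exact one_ne_zero
    rw [hS, finsum_mem_pair hpq, hw p, hw q, circ_apply, circ_apply, if_pos rfl,
      if_neg hpw, if_neg hqw, if_pos rfl]
    ring
  · have hS : {v : Fin 3 | (circuit k {({v} : Finset (Fin 3))} {u}) {w} ≠ 0} = {w} := by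
      ext v
      simp only [Set.mem_setOf_eq, circ_apply k, Set.mem_singleton_iff]
      rw [if_neg (fun h : u = w => hwu h.symm), zero_sub]
      by_cases hvw : v = w
      · simp [hvw]
      · simp [hvw]
    rw [hS, finsum_mem_singleton, hw w, circ_apply, if_neg (fun h : u = w => hwu h.symm),
      if_pos rfl, if_neg hwu]
    ring

lemma fence_set_jl (hb2 : faces (K I b) 2 = {σ | σ.card = 2})
    (hbd : bdries k (K I b) 2 = ⊥)
    (ha1 : faces (K I a) 1 = {σ | σ.card = 1})
    (hB : ∀ q, b q = a q + stdVec i q)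
    (hij : i ≠ j) (hil : i ≠ l) (hjl : j ≠ l) (σbot : Finset (Fin 3)) :
    {f : FData 1 | IsFence k I a (fun _ : Fin 1 => i) 2 σbot {j, l} f} = ∅ := by
  have hpt1 := pt_one_eq_b (i := i) hB
  have hfjl : ({j, l} : Finset (Fin 3)) ∈ faces (K I b) 2 := by
    rw [hb2]; exact Finset.card_pair hjl
  have hRim := hedgeRim_eq k hbd hfjl
  ext f
  obtain ⟨hr, tau, sig⟩ := f
  simp only [Set.mem_setOf_eq, Set.mem_empty_iff_false, iff_false]
  rintro ⟨hhr, htauf, hsigf, htau0, hsig1, hrim, hlink, -, hcirc⟩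
  simp only at htau0 hsig1 hrim hlink hcirc htauf hsigf
  rw [hedgerow_iff k hb2 hbd ha1 hB] at hhr
  obtain ⟨h1, -, -, v, -⟩ := hhr
  have htau1 : tau (Fin.last 1) = {j, l} := by
    by_contra hne
    apply hrim
    rw [hpt1, h1, hRim, Finsupp.single_apply, if_neg (fun hh => hne hh.symm)]
  have hsig0 : sig 0 = {j, l} := by
    have := hlink 0
    rw [show (0 : Fin 1).castSucc = 0 from rfl, show (0 : Fin 1).succ = 1 from rfl] at this
    rw [this, show tau 1 = ({j, l} : Finset (Fin 3)) from htau1,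
      Finset.erase_eq_of_notMem (by
        intro hmem
        rcases Finset.mem_insert.mp hmem with h | h
        · exact hij h
        · exact hil (Finset.mem_singleton.mp h))]
  have := hsigf 0 (by simp)
  rw [show ((0 : Fin 2) : ℕ) = 0 from rfl, pt_zero, ha1, hsig0] at this
  have hcard : ({j, l} : Finset (Fin 3)).card = 1 := this
  rw [Finset.card_pair hjl] at hcard
  omega

lemma nlen_eq (hB : ∀ q, b q = a q + stdVec i q) : nlen a b = 1 := by
  have hq : ∀ q, b q - a q = stdVec i q := fun q => by rw [hB q]; omega
  rw [nlen]
  simp only [hq, stdVec]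
  rw [Finset.sum_ite_eq' Finset.univ i (fun _ => 1)]
  simp

lemma D_eq_Dpath (hB : ∀ q, b q = a q + stdVec i q) (σ τ : Finset (Fin 3)) :
    D k I a b 2 σ τ = Dpath k I a (fun _ : Fin 1 => i) 2 σ τ := by
  have hN := nlen_eq (i := i) hB
  simp only [D]
  rw [hN, path_set hB, finsum_mem_singleton]

lemma Dpath_eq (hb2 : faces (K I b) 2 = {σ | σ.card = 2})
    (hbd : bdries k (K I b) 2 = ⊥)
    (ha1 : faces (K I a) 1 = {σ | σ.card = 1})
    (hB : ∀ q, b q = a q + stdVec i q)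
    (σ τ : Finset (Fin 3)) :
    Dpath k I a (fun _ : Fin 1 => i) 2 σ τ
      = (3:k)⁻¹ * ∑ᶠ f ∈ {f : FData 1 | IsFence k I a (fun _ : Fin 1 => i) 2 σ τ f},
          weight k I a (fun _ : Fin 1 => i) 2 σ τ f := by
  rw [Dpath, delta_eq k hb2 hbd ha1 hB]
  norm_num

end Aux6
/-- If `a = b - e_i`, `K^b I` is `⟨ij,ik,jk⟩`, and `K^a I` is
`⟨ij,k⟩` or `⟨i,j,k⟩`, then the degree-1 sylvan matrix is as displayed. -/
theorem statement5 (k : Type) [Field k] (h2 : (2:k) ≠ 0) (h3 : (3:k) ≠ 0)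
    (I : Set V3) (hI : IsMonomialIdeal I) (a b : V3)
    (i j l : Fin 3) (hij : i ≠ j) (hil : i ≠ l) (hjl : j ≠ l)
    (hB : ∀ q, b q = a q + stdVec i q)
    (hKb : hasFacets (K I b) {{i, j}, {i, l}, {j, l}})
    (hKa : hasFacets (K I a) {{i, j}, {l}} ∨ hasFacets (K I a) {{i}, {j}, {l}}) :
    D k I a b 2 {i} {i, j} = coeffSign k j {i, j} / 3 ∧
    D k I a b 2 {j} {i, j} = 2 * coeffSign k i {i, j} / 3 ∧
    D k I a b 2 {l} {i, j} = coeffSign k j {i, j} / 3 ∧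
    D k I a b 2 {i} {i, l} = coeffSign k l {i, l} / 3 ∧
    D k I a b 2 {j} {i, l} = coeffSign k l {i, l} / 3 ∧
    D k I a b 2 {l} {i, l} = 2 * coeffSign k i {i, l} / 3 ∧
    (∀ v : Fin 3, ({v} : Finset (Fin 3)) ∈ K I a →
      D k I a b 2 {v} {j, l} = 0) := by
  have hb2 := faces_b2 hij hil hjl hKb
  have hb3 := faces_b3 hij hil hjl hKb
  have hbd := bdries_b2_bot k hb3
  have ha1 := faces_a1 hij hil hjl hKa
  have hDij : ∀ w : Fin 3, D k I a b 2 {w} {i, j}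
      = (3:k)⁻¹ * (if w = j then 2 * coeffSign k i {i, j} else - coeffSign k i {i, j}) := by
    intro w
    rw [D_eq_Dpath k hB, Dpath_eq k hb2 hbd ha1 hB, fence_sum k hb2 hbd ha1 hB hij w]
  have hDil : ∀ w : Fin 3, D k I a b 2 {w} {i, l}
      = (3:k)⁻¹ * (if w = l then 2 * coeffSign k i {i, l} else - coeffSign k i {i, l}) := by
    intro w
    rw [D_eq_Dpath k hB, Dpath_eq k hb2 hbd ha1 hB, fence_sum k hb2 hbd ha1 hB hil w]
  have hDjl : ∀ σ : Finset (Fin 3), D k I a b 2 σ {j, l} = 0 := by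
    intro σ
    rw [D_eq_Dpath k hB, Dpath_eq k hb2 hbd ha1 hB,
      fence_set_jl k hb2 hbd ha1 hB hij hil hjl σ, finsum_mem_empty, mul_zero]
  refine ⟨?_, ?_, ?_, ?_, ?_, ?_, ?_⟩
  · rw [hDij i, if_neg hij, coeffSign_pair_neg k hij, neg_neg, inv_mul_eq_div]
  · rw [hDij j, if_pos rfl, inv_mul_eq_div]
  · rw [hDij l, if_neg (fun h => hjl h.symm), coeffSign_pair_neg k hij, neg_neg, inv_mul_eq_div]
  · rw [hDil i, if_neg hil, coeffSign_pair_neg k hil, neg_neg, inv_mul_eq_div]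
  · rw [hDil j, if_neg hjl, coeffSign_pair_neg k hil, neg_neg, inv_mul_eq_div]
  · rw [hDil l, if_pos rfl, inv_mul_eq_div]
  · intro v _
    exact hDjl {v}

end Sylvan

end
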